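/- Let T be a tree in which all sensor paths of a threshold-k resolving set S of size m are pairwise edge-disjoint. Form the multigraph H on vertex set S by joining s₁, s₂ ∈ S with an edge whenever the path P_T(s₁,s₂) is a sensor path (contains no sensor other than its endpoints). Then H is a tree on m vertices, and hence T has exactly m − 1 sensor paths. -/

import Mathlib

open SimpleGraph Finset

variable {V : Type*}

/-- Truncated graph distance `d_k(x,y) = min(d(x,y), k+1)`. -/
noncomputable def dk (G : SimpleGraph V) (k : ℕ) (x y : V) : ℕ := min (G.dist x y) (k + 1)

/-- `w` lies on a shortest path (in a tree: the unique path) between `x` and `y`. -/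
def OnPath (G : SimpleGraph V) (x y w : V) : Prop :=
  G.dist x w + G.dist w y = G.dist x y

/-- `S` is a threshold-`k` resolving set for `G`. -/
def ThresholdResolving (G : SimpleGraph V) (k : ℕ) (S : Set V) : Prop :=
  (∀ x y : V, x ≠ y → ∃ s ∈ S, dk G k s x ≠ dk G k s y) ∧
  (∀ x : V, ∃ s ∈ S, G.dist s x ≤ k)

/-- A sensor `s` directly measures `x`: `d(s,x) ≤ k` and no other sensor lies on the
path from `s` to `x`. -/
def DirectlyMeasures (G : SimpleGraph V) (k : ℕ) (S : Set V) (s x : V) : Prop :=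
  G.dist s x ≤ k ∧ ∀ t ∈ S, t ≠ s → ¬ OnPath G s x t

/-- The threshold-`k` metric dimension of a finite graph. -/
noncomputable def Tmd (G : SimpleGraph V) [Fintype V] (k : ℕ) : ℕ :=
  sInf {m | ∃ S : Finset V, ThresholdResolving G k ↑S ∧ S.card = m}

/-- The path between the sensors `s₁ ≠ s₂` contains no other sensor. -/
def SensorPath (G : SimpleGraph V) (S : Set V) (s₁ s₂ : V) : Prop :=
  s₁ ≠ s₂ ∧ s₁ ∈ S ∧ s₂ ∈ S ∧ ∀ t ∈ S, OnPath G s₁ s₂ t → t = s₁ ∨ t = s₂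

/-- The edge `{a,b}` lies on the (tree-)path between `x` and `y`. -/
def EdgeOnPath (G : SimpleGraph V) (x y a b : V) : Prop :=
  G.Adj a b ∧ OnPath G x y a ∧ OnPath G x y b

/-- A leaf-path of length `ℓ` starting at `v`: an induced path `v = p 0, p 1, …, p ℓ`
with `deg v ≥ 3`, ending in a leaf, all internal vertices of degree 2. -/
def IsLeafPath (G : SimpleGraph V) [Fintype V] [DecidableRel G.Adj]
    (v : V) (ℓ : ℕ) (p : Fin (ℓ + 1) → V) : Prop :=
  Function.Injective p ∧ p 0 = v ∧ 3 ≤ G.degree v ∧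
  (∀ i : Fin ℓ, G.Adj (p i.castSucc) (p i.succ)) ∧
  G.degree (p (Fin.last ℓ)) = 1 ∧
  ∀ i : Fin (ℓ + 1), (i : ℕ) ≠ 0 → (i : ℕ) ≠ ℓ → G.degree (p i) = 2

/-- Upper complexity of a path of length `ℓ` (with `ℓ = q(3k+2)+r`). -/
def cbar (k ℓ : ℕ) : ℕ :=
  2 * (ℓ / (3 * k + 2)) + (if 1 ≤ ℓ % (3 * k + 2) then 1 else 0) +
    (if 2 * k + 2 ≤ ℓ % (3 * k + 2) then 1 else 0)

/-- Lower complexity of a path of length `ℓ` (with `ℓ = q(3k+2)+r`). -/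
def clow (k ℓ : ℕ) : ℕ :=
  2 * (ℓ / (3 * k + 2)) + (if k + 1 ≤ ℓ % (3 * k + 2) then 1 else 0) +
    (if 2 * k + 2 ≤ ℓ % (3 * k + 2) then 1 else 0)

/-- The type of a vertex `v` with respect to the sensor pair `(s, s')`. -/
noncomputable def typ (G : SimpleGraph V) (s s' v : V) : ℤ :=
  ((G.dist v s : ℤ) - (G.dist v s' : ℤ) + (G.dist s s' : ℤ)) / 2

/-- The attraction of the pair of sensors `{s, s'}`. -/
def PairAttraction (G : SimpleGraph V) (k : ℕ) (S : Set V) (s s' : V) : Set V :=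
  {x | x ∉ S ∧ DirectlyMeasures G k S s x ∧ DirectlyMeasures G k S s' x ∧
    (∀ t ∈ S, t ≠ s → t ≠ s' → ¬ DirectlyMeasures G k S t x) ∧
    ∀ y : V, y ≠ x → y ∉ S →
      (∀ t ∈ S, t ≠ s → t ≠ s' → ¬ DirectlyMeasures G k S t y) →
      dk G k s x ≠ dk G k s y ∨ dk G k s' x ≠ dk G k s' y}

/-- The subset of sensors `S' ⊆ S` minimally resolves the vertex `x`. -/
def MinimallyResolves (G : SimpleGraph V) (k : ℕ) (S S' : Set V) (x : V) : Prop :=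
  x ∉ S ∧ (∀ s ∈ S', G.dist s x ≤ k) ∧
  (∀ t ∈ S, t ∉ S' → ¬ DirectlyMeasures G k S t x) ∧
  (∀ y : V, y ≠ x → (∀ t ∈ S, t ∉ S' → ¬ DirectlyMeasures G k S t y) →
    ∃ s ∈ S', dk G k s x ≠ dk G k s y) ∧
  (∀ s ∈ S', DirectlyMeasures G k S s x)


section MyHelpers
variable {V : Type*} [DecidableEq V]

lemma my_tree_path_length {G : SimpleGraph V} (hT : G.IsTree) {u v : V}
    (p : G.Walk u v) (hp : p.IsPath) : p.length = G.dist u v := by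
  obtain ⟨q, hq⟩ := (hT.isConnected.preconnected u v).exists_walk_length_eq_dist
  have h1 : (⟨p, hp⟩ : G.Path u v) = ⟨q.bypass, q.bypass_isPath⟩ :=
    hT.IsAcyclic.path_unique _ _
  have h2 : p = q.bypass := congrArg Subtype.val h1
  have h3 := q.length_bypass_le
  have h4 := SimpleGraph.dist_le p
  rw [h2] at h4 ⊢
  omega

lemma my_onPath_of_mem_support {G : SimpleGraph V} (hT : G.IsTree) {u v x : V}
    (p : G.Walk u v) (hp : p.IsPath) (hx : x ∈ p.support) :
    G.dist u x + G.dist x v = G.dist u v := by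
  have h1 := my_tree_path_length hT _ (hp.takeUntil hx)
  have h2 := my_tree_path_length hT _ (hp.dropUntil hx)
  have h3 : (p.takeUntil x hx).length + (p.dropUntil x hx).length = p.length := by
    rw [← SimpleGraph.Walk.length_append, SimpleGraph.Walk.take_spec]
  have h4 := my_tree_path_length hT p hp
  omega

lemma my_edge_avoided_reachable {G : SimpleGraph V} (hT : G.IsTree) {u v a b : V}
    (h : ¬ EdgeOnPath G u v a b) (hr : G.Reachable u v) :
    (G.deleteEdges {s(a, b)}).Reachable u v := by
  obtain ⟨p0⟩ := hr
  refine ⟨(p0.bypass).toDeleteEdges _ ?_⟩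
  intro e he hmem
  simp only [Set.mem_singleton_iff] at hmem
  subst hmem
  exact h ⟨p0.bypass.adj_of_mem_edges he,
    my_onPath_of_mem_support hT _ p0.bypass_isPath
      (p0.bypass.fst_mem_support_of_mem_edges he),
    my_onPath_of_mem_support hT _ p0.bypass_isPath
      (p0.bypass.snd_mem_support_of_mem_edges he)⟩

end MyHelpers

/-- contracting the pairwise edge-disjoint sensor paths of a tree yields
a tree on the `m` sensors; hence there are exactly `m − 1` sensor paths. -/
theorem stmt6 (G : SimpleGraph V) [Fintype V] [DecidableEq V] (hT : G.IsTree)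
    (k : ℕ) (hk : 1 ≤ k) (S : Set V) (hS : ThresholdResolving G k S)
    (m : ℕ) (hm : S.ncard = m)
    (hdisj : ∀ s₁ s₂ s₃ s₄ : V, SensorPath G S s₁ s₂ → SensorPath G S s₃ s₄ →
      ({s₁, s₂} : Set V) ≠ {s₃, s₄} →
      ∀ a b : V, ¬ (EdgeOnPath G s₁ s₂ a b ∧ EdgeOnPath G s₃ s₄ a b))
    (H : SimpleGraph S)
    (hH : ∀ a b : S, H.Adj a b ↔ SensorPath G S (a : V) (b : V)) :
    H.IsTree ∧ H.edgeSet.ncard = m - 1 := by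
  classical
  haveI : Fintype ↥S := S.toFinite.fintype
  have hconn := hT.isConnected
  -- Nonempty S
  obtain ⟨v0⟩ := hconn.nonempty
  obtain ⟨s0, hs0, -⟩ := hS.2 v0
  haveI : Nonempty ↥S := ⟨⟨s0, hs0⟩⟩
  -- connectivity of H
  have key : ∀ n (σ τ : ↥S), G.dist ↑σ ↑τ ≤ n → H.Reachable σ τ := by
    intro n
    induction n with
    | zero =>
      intro σ τ h
      have h0 : G.dist (σ : V) ↑τ = 0 := Nat.le_zero.mp h
      have : (σ : V) = ↑τ := (hconn.dist_eq_zero_iff).mp h0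
      rw [Subtype.ext this]
    | succ n ih =>
      intro σ τ hd
      by_cases hst : σ = τ
      · rw [hst]
      · have hne : (σ : V) ≠ ↑τ := fun h => hst (Subtype.ext h)
        by_cases hsp : ∀ t ∈ S, OnPath G ↑σ ↑τ t → t = ↑σ ∨ t = ↑τ
        · exact ((hH σ τ).2 ⟨hne, σ.2, τ.2, hsp⟩).reachable
        · push_neg at hsp
          obtain ⟨u, huS, hup, hus, hut⟩ := hsp
          have hsum : G.dist ↑σ u + G.dist u ↑τ = G.dist ↑σ ↑τ := hup
          have h1 : 0 < G.dist (σ : V) u := hconn.pos_dist_of_ne (fun h => hus h.symm)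
          have h2 : 0 < G.dist u (τ : V) := hconn.pos_dist_of_ne hut
          exact (ih σ ⟨u, huS⟩ (by show G.dist ↑σ u ≤ n; omega)).trans
            (ih ⟨u, huS⟩ τ (by show G.dist u ↑τ ≤ n; omega))
  have hconnH : H.Connected := ⟨fun σ τ => key _ σ τ le_rfl⟩
  -- acyclicity of H
  have hacyc : H.IsAcyclic := by
    rw [SimpleGraph.isAcyclic_iff_forall_adj_isBridge]
    intro σ τ hadj
    rw [SimpleGraph.isBridge_iff]
    have hsp : SensorPath G S (σ : V) ↑τ := (hH σ τ).1 hadj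
    have hne : (σ : V) ≠ ↑τ := hsp.1
    obtain ⟨p, hp⟩ : ∃ p : G.Walk ↑σ ↑τ, p.IsPath :=
      ⟨(hconn.preconnected ↑σ ↑τ).some.bypass, SimpleGraph.Walk.bypass_isPath _⟩
    obtain ⟨c, h₁, q, rfl⟩ := SimpleGraph.Walk.exists_eq_cons_of_ne hne p
    · -- the first edge e = s(σ, c) of the path from σ to τ
      have hA : ¬ (G \ SimpleGraph.fromEdgeSet {s((σ : V), c)}).Reachable ↑σ c :=
        ((SimpleGraph.isBridge_iff).mp
          (SimpleGraph.isAcyclic_iff_forall_adj_isBridge.mp hT.IsAcyclic h₁))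
      have henq : s((σ : V), c) ∉ q.edges := by
        have hnd := hp.edges_nodup
        rw [SimpleGraph.Walk.edges_cons] at hnd
        exact (List.nodup_cons.mp hnd).1
      have hB : (G.deleteEdges {s((σ : V), c)}).Reachable c ↑τ := by
        refine ⟨q.toDeleteEdges _ ?_⟩
        intro e he hmem
        simp only [Set.mem_singleton_iff] at hmem
        subst hmem
        exact henq he
      have hEOP : EdgeOnPath G ↑σ ↑τ ↑σ c := by
        refine ⟨h₁, ?_, ?_⟩
        · show G.dist ↑σ ↑σ + G.dist ↑σ ↑τ = G.dist ↑σ ↑τ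
          rw [SimpleGraph.dist_self]
          omega
        · exact my_onPath_of_mem_support hT _ hp (by
            rw [SimpleGraph.Walk.support_cons]
            exact List.mem_cons_of_mem _ q.start_mem_support)
      intro hreach
      obtain ⟨w⟩ := hreach
      have hwalk : ∀ {x y : ↥S} (w : (H \ SimpleGraph.fromEdgeSet {s(σ, τ)}).Walk x y),
          (G.deleteEdges {s((σ : V), c)}).Reachable ↑x ↑y := by
        intro x y w
        induction w with
        | nil => exact SimpleGraph.Reachable.refl _
        | @cons x z y ha _ ih =>
          have hHadj : H.Adj x z := ha.1
          have hsym : s(x, z) ≠ s(σ, τ) := by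
            intro h
            exact ha.2 ((SimpleGraph.fromEdgeSet_adj _).mpr ⟨by simp [h], hHadj.ne⟩)
          have hxz : SensorPath G S (x : V) ↑z := (hH x z).1 hHadj
          have hsetne : ({(x : V), ↑z} : Set V) ≠ {↑σ, ↑τ} := by
            intro hset
            apply hsym
            rcases Set.pair_eq_pair_iff.mp hset with ⟨h1, h2⟩ | ⟨h1, h2⟩
            · rw [Subtype.ext h1, Subtype.ext h2]
            · rw [Subtype.ext h1, Subtype.ext h2, Sym2.eq_swap]
          have hnEOP : ¬ EdgeOnPath G ↑x ↑z ↑σ c := fun h =>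
            hdisj ↑x ↑z ↑σ ↑τ hxz hsp hsetne ↑σ c ⟨h, hEOP⟩
          exact (my_edge_avoided_reachable hT hnEOP
            (hconn.preconnected ↑x ↑z)).trans ih
      have hst : (G.deleteEdges {s((σ : V), c)}).Reachable ↑σ ↑τ := hwalk w
      exact hA (hst.trans hB.symm)
  have htree : H.IsTree := ⟨hconnH, hacyc⟩
  refine ⟨htree, ?_⟩
  haveI : Fintype H.edgeSet := Fintype.ofFinite _
  have hcard := htree.card_edgeFinset
  have h1 : H.edgeSet.ncard = H.edgeFinset.card := by
    rw [Set.ncard_eq_toFinset_card']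
    congr 1
  have h2 : Fintype.card ↥S = m := by
    rw [← hm, Set.ncard_eq_toFinset_card', Set.toFinset_card]
  omega
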